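/- Let K*_{n1,n2}(·;q1,q2;x,y) be the bivariate Dunkl q-Szász-Mirakjan-Kantorovich-Stancu operator. Then for all n1,n2 ∈ ℕ⁺, 0<q1,q2<1, μ1,μ2>1/2, α1,α2,β1,β2 ≥ 0 and x,y ≥ 0, applying the operator to the test function e_{0,1}(u,v)=v gives K*_{n1,n2}(e_{0,1};q1,q2;x,y) = (n2/(n2+β2))·(α2/n2 + 1/([2]_{q2}[n2]_{q2})) + (2n2·q2/([2]_{q2}(n2+β2)))·y. -/

import Mathlib

/-- The `q`-number `[x]_q = (1 - q^x)/(1 - q)` for a real exponent `x`. -/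
noncomputable def qNum (q x : ℝ) : ℝ := (1 - q ^ x) / (1 - q)

/-- `θ_k = 0` if `k` is even and `1` if `k` is odd. -/
def theta (k : ℕ) : ℕ := if Even k then 0 else 1

/-- The Dunkl `q`-gamma coefficients: `γ_{μ,q}(0) = 1`,
`γ_{μ,q}(k+1) = [2μθ_{k+1} + k + 1]_q ⬝ γ_{μ,q}(k)`. -/
noncomputable def gammaD (mu q : ℝ) : ℕ → ℝ
  | 0 => 1
  | k + 1 => qNum q (2 * mu * (theta (k + 1) : ℝ) + ((k : ℝ) + 1)) * gammaD mu q k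

/-- The Dunkl `q`-exponential `E_{μ,q}(x) = Σ q^{k(k-1)/2} x^k / γ_{μ,q}(k)`. -/
noncomputable def EDunkl (mu q x : ℝ) : ℝ :=
  ∑' k : ℕ, q ^ (k * (k - 1) / 2) * x ^ k / gammaD mu q k

/-- The Jackson `q`-integral `∫_a^b f(t) d_q t`. -/
noncomputable def jacksonInt (q : ℝ) (f : ℝ → ℝ) (a b : ℝ) : ℝ :=
  (1 - q) * (b * ∑' j : ℕ, q ^ j * f (b * q ^ j) - a * ∑' j : ℕ, q ^ j * f (a * q ^ j))

/-- Lower endpoint `[k + 2μθ_k]_q / (q^{k-2} [n]_q)`. -/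
noncomputable def lowB (q mu : ℝ) (n k : ℕ) : ℝ :=
  qNum q ((k : ℝ) + 2 * mu * (theta k : ℝ)) / (q ^ ((k : ℝ) - 2) * qNum q (n : ℝ))

/-- Upper endpoint `([k + 1 + 2μθ_k]_q - 1) / (q^{k-1} [n]_q) + 1/[n]_q`. -/
noncomputable def uppB (q mu : ℝ) (n k : ℕ) : ℝ :=
  (qNum q ((k : ℝ) + 1 + 2 * mu * (theta k : ℝ)) - 1) / (q ^ ((k : ℝ) - 1) * qNum q (n : ℝ))
    + 1 / qNum q (n : ℝ)

/-- The Dunkl `q`-Szász-Mirakjan-Kantorovich-Stancu operator `K̃_{n,q}(f;x)`. -/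
noncomputable def KT (n : ℕ) (q mu α β : ℝ) (f : ℝ → ℝ) (x : ℝ) : ℝ :=
  qNum q (n : ℝ) / EDunkl mu q (qNum q (n : ℝ) * x) *
    ∑' k : ℕ, (qNum q (n : ℝ) * x) ^ k / gammaD mu q k * q ^ (k * (k - 1) / 2) *
      jacksonInt q (fun t => f (((n : ℝ) * t + α) / ((n : ℝ) + β))) (lowB q mu n k) (uppB q mu n k)

/-- The bivariate Dunkl `q`-Szász-Mirakjan-Kantorovich-Stancu operator
`K*_{n₁,n₂}(f; q₁, q₂; x, y)`. -/
noncomputable def KB (n₁ n₂ : ℕ) (q₁ q₂ mu₁ mu₂ α₁ α₂ β₁ β₂ : ℝ) (f : ℝ → ℝ → ℝ)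
    (x y : ℝ) : ℝ :=
  qNum q₁ (n₁ : ℝ) * qNum q₂ (n₂ : ℝ) /
      (EDunkl mu₁ q₁ (qNum q₁ (n₁ : ℝ) * x) * EDunkl mu₂ q₂ (qNum q₂ (n₂ : ℝ) * y)) *
    ∑' k₁ : ℕ, ∑' k₂ : ℕ,
      (qNum q₁ (n₁ : ℝ) * x) ^ k₁ / gammaD mu₁ q₁ k₁ *
        ((qNum q₂ (n₂ : ℝ) * y) ^ k₂ / gammaD mu₂ q₂ k₂) *
        q₁ ^ (k₁ * (k₁ - 1) / 2) * q₂ ^ (k₂ * (k₂ - 1) / 2) *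
        jacksonInt q₂ (fun t =>
            jacksonInt q₁ (fun s =>
                f (((n₁ : ℝ) * s + α₁) / ((n₁ : ℝ) + β₁)) (((n₂ : ℝ) * t + α₂) / ((n₂ : ℝ) + β₂)))
              (lowB q₁ mu₁ n₁ k₁) (uppB q₁ mu₁ n₁ k₁))
          (lowB q₂ mu₂ n₂ k₂) (uppB q₂ mu₂ n₂ k₂)

section Aux

variable {q mu : ℝ}

lemma qNum_pos (hq0 : 0 < q) (hq1 : q < 1) {x : ℝ} (hx : 0 < x) : 0 < qNum q x := by
  have h1 : q ^ x < 1 := Real.rpow_lt_one hq0.le hq1 hx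
  have h2 : (0:ℝ) < 1 - q := by linarith
  exact div_pos (by linarith) h2

lemma qNum_one_le (hq0 : 0 < q) (hq1 : q < 1) {x : ℝ} (hx : 1 ≤ x) : 1 ≤ qNum q x := by
  have h1 : q ^ x ≤ q ^ (1:ℝ) := Real.rpow_le_rpow_of_exponent_ge hq0 hq1.le hx
  rw [Real.rpow_one] at h1
  rw [qNum, le_div_iff₀ (by linarith)]
  linarith

lemma theta_nonneg (k : ℕ) : (0:ℝ) ≤ (theta k : ℝ) := by positivity

lemma gammaD_one_le (hq0 : 0 < q) (hq1 : q < 1) (hmu : 1/2 < mu) (k : ℕ) :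
    1 ≤ gammaD mu q k := by
  induction k with
  | zero => simp [gammaD]
  | succ m ih =>
      have harg : (1:ℝ) ≤ 2 * mu * (theta (m+1) : ℝ) + ((m : ℝ) + 1) := by
        have := theta_nonneg (m+1)
        have hm : (0:ℝ) ≤ (m:ℝ) := Nat.cast_nonneg m
        nlinarith
      have := qNum_one_le hq0 hq1 harg
      calc (1:ℝ) = 1 * 1 := by ring
      _ ≤ qNum q (2 * mu * (theta (m+1) : ℝ) + ((m : ℝ) + 1)) * gammaD mu q m :=
          mul_le_mul this ih zero_le_one (by linarith)
      _ = gammaD mu q (m+1) := rfl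

lemma gammaD_pos (hq0 : 0 < q) (hq1 : q < 1) (hmu : 1/2 < mu) (k : ℕ) :
    0 < gammaD mu q k := lt_of_lt_of_le one_pos (gammaD_one_le hq0 hq1 hmu k)

lemma exp_succ (k : ℕ) : (k+1) * ((k+1) - 1) / 2 = k * (k-1)/2 + k := by
  cases k with
  | zero => rfl
  | succ m =>
      have h : (m+1+1) * (m+1+1-1) = (m+1) * ((m+1)-1) + (m+1) * 2 := by
        simp only [Nat.add_sub_cancel]
        ring
      rw [Nat.add_sub_cancel] at h ⊢
      rw [h, Nat.add_mul_div_right _ _ (by norm_num : 0 < 2)]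

lemma summable_u (hq0 : 0 < q) (hq1 : q < 1) (hmu : 1/2 < mu) {z : ℝ} (hz : 0 ≤ z) :
    Summable (fun k : ℕ => z ^ k / gammaD mu q k * q ^ (k * (k - 1) / 2)) := by
  set u := fun k : ℕ => z ^ k / gammaD mu q k * q ^ (k * (k - 1) / 2) with hu
  have hnn : ∀ k, 0 ≤ u k := fun k => by
    have := (gammaD_pos hq0 hq1 hmu k)
    positivity
  apply summable_of_ratio_norm_eventually_le (r := 1/2) (by norm_num)
  have htend : Filter.Tendsto (fun k : ℕ => z * q ^ k) Filter.atTop (nhds 0) := by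
    simpa using (tendsto_pow_atTop_nhds_zero_of_lt_one hq0.le hq1).const_mul z
  filter_upwards [htend.eventually_le_const (by norm_num : (0:ℝ) < 1/2)] with k hk
  have hkey : u (k+1) ≤ (z * q ^ k) * u k := by
    have hG := qNum_one_le hq0 hq1 (x := 2 * mu * (theta (k+1) : ℝ) + ((k : ℝ) + 1))
      (by have := theta_nonneg (k+1); have : (0:ℝ) ≤ (k:ℝ) := Nat.cast_nonneg k; nlinarith [theta_nonneg (k+1)])
    have hGpos : 0 < qNum q (2 * mu * (theta (k+1) : ℝ) + ((k : ℝ) + 1)) := by linarith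
    have hgk := gammaD_pos hq0 hq1 hmu k
    have hexp : u (k+1) = (z * q ^ k / qNum q (2 * mu * (theta (k+1) : ℝ) + ((k : ℝ) + 1))) * u k := by
      simp only [hu, gammaD, exp_succ, pow_add]
      field_simp
    rw [hexp]
    have h1 : z * q ^ k / qNum q (2 * mu * (theta (k+1) : ℝ) + ((k : ℝ) + 1)) ≤ z * q ^ k := by
      apply div_le_self (by positivity) hG
    exact mul_le_mul_of_nonneg_right h1 (hnn k)
  rw [Real.norm_of_nonneg (hnn (k+1)), Real.norm_of_nonneg (hnn k)]
  calc u (k+1) ≤ (z * q ^ k) * u k := hkey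
  _ ≤ (1/2) * u k := mul_le_mul_of_nonneg_right hk (hnn k)

end Aux

section Aux2

variable {q mu : ℝ}

lemma jackson_affine (hq0 : 0 < q) (hq1 : q < 1) (c₁ c₀ a b : ℝ) :
    jacksonInt q (fun t => c₁ * t + c₀) a b = c₁ * (b^2 - a^2) / (1 + q) + c₀ * (b - a) := by
  have hq2 : q^2 < 1 := by nlinarith
  have hs : ∀ c : ℝ, ∑' j : ℕ, q ^ j * (c₁ * (c * q ^ j) + c₀)
      = c₁ * c / (1 - q^2) + c₀ / (1 - q) := by
    intro c
    have h1 : Summable (fun j : ℕ => c₁ * c * ((q^2) ^ j)) :=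
      (summable_geometric_of_lt_one (by positivity) hq2).mul_left _
    have h2 : Summable (fun j : ℕ => c₀ * q ^ j) :=
      (summable_geometric_of_lt_one hq0.le hq1).mul_left _
    have he : ∀ j : ℕ, q ^ j * (c₁ * (c * q ^ j) + c₀)
        = c₁ * c * ((q^2) ^ j) + c₀ * q ^ j := by
      intro j; rw [← pow_mul]; ring
    rw [tsum_congr he, Summable.tsum_add h1 h2, tsum_mul_left, tsum_mul_left,
      tsum_geometric_of_lt_one (by positivity) hq2,
      tsum_geometric_of_lt_one hq0.le hq1]
    field_simp
  rw [jacksonInt, hs, hs]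
  have h1 : (1:ℝ) - q ≠ 0 := by linarith
  have h2 : (1:ℝ) + q ≠ 0 := by linarith
  have h3 : (1:ℝ) - q^2 = (1-q)*(1+q) := by ring
  rw [h3]
  field_simp
  ring

lemma jackson_const (hq0 : 0 < q) (hq1 : q < 1) (c a b : ℝ) :
    jacksonInt q (fun _ => c) a b = c * (b - a) := by
  have := jackson_affine hq0 hq1 0 c a b
  simpa using this

lemma upp_sub_low (hq0 : 0 < q) (hq1 : q < 1) {n : ℕ} (hn : 0 < n) (k : ℕ) :
    uppB q mu n k = lowB q mu n k + 1 / qNum q (n : ℝ) := by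
  have hN : 0 < qNum q (n : ℝ) := qNum_pos hq0 hq1 (by exact_mod_cast hn)
  have h1q : (1:ℝ) - q ≠ 0 := by linarith
  have hnum : qNum q ((k : ℝ) + 1 + 2 * mu * (theta k : ℝ)) - 1
      = q * qNum q ((k : ℝ) + 2 * mu * (theta k : ℝ)) := by
    have hrw : q ^ ((k : ℝ) + 1 + 2 * mu * (theta k : ℝ))
        = q * q ^ ((k : ℝ) + 2 * mu * (theta k : ℝ)) := by
      rw [show (k : ℝ) + 1 + 2 * mu * (theta k : ℝ) = 1 + ((k:ℝ) + 2 * mu * (theta k : ℝ)) by ring,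
        Real.rpow_add hq0, Real.rpow_one]
    rw [qNum, qNum, hrw]
    field_simp
    ring
  have hpow : q ^ ((k : ℝ) - 1) = q * q ^ ((k : ℝ) - 2) := by
    rw [show (k:ℝ) - 1 = 1 + ((k:ℝ) - 2) by ring, Real.rpow_add hq0, Real.rpow_one]
  have hqpow : q ^ ((k:ℝ) - 2) ≠ 0 := by positivity
  rw [uppB, lowB, hnum, hpow]
  field_simp

lemma low_zero : lowB q mu n 0 = 0 := by
  simp [lowB, theta, qNum]

lemma u_low_succ (hq0 : 0 < q) (hq1 : q < 1) (hmu : 1/2 < mu) {z : ℝ} {n : ℕ}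
    (hn : 0 < n) (k : ℕ) :
    z ^ (k+1) / gammaD mu q (k+1) * q ^ ((k+1) * ((k+1) - 1) / 2) * lowB q mu n (k+1)
      = (q * z / qNum q (n : ℝ)) * (z ^ k / gammaD mu q k * q ^ (k * (k - 1) / 2)) := by
  have hN : 0 < qNum q (n : ℝ) := qNum_pos hq0 hq1 (by exact_mod_cast hn)
  have hG : 0 < qNum q (2 * mu * (theta (k+1) : ℝ) + ((k : ℝ) + 1)) := by
    have := qNum_one_le hq0 hq1 (x := 2 * mu * (theta (k+1) : ℝ) + ((k : ℝ) + 1))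
      (by have := theta_nonneg (k+1); have : (0:ℝ) ≤ (k:ℝ) := Nat.cast_nonneg k; nlinarith)
    linarith
  have hγ := gammaD_pos hq0 hq1 hmu k
  have hqk : (0:ℝ) < q ^ ((k:ℝ) - 1) := Real.rpow_pos_of_pos hq0 _
  have hdiv : (q:ℝ) ^ k = q * q ^ ((k:ℝ) - 1) := by
    have h : q * q ^ ((k:ℝ)-1) = q ^ (1 + ((k:ℝ)-1)) := by
      rw [Real.rpow_add hq0, Real.rpow_one]
    rw [h, show 1 + ((k:ℝ)-1) = (k:ℝ) by ring, Real.rpow_natCast]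
  rw [lowB,
    show (((k+1 : ℕ)):ℝ) + 2*mu*((theta (k+1) : ℕ):ℝ)
      = 2*mu*(theta (k+1) : ℝ) + ((k:ℝ)+1) by push_cast; ring,
    show (((k+1 : ℕ)):ℝ) - 2 = (k:ℝ) - 1 by push_cast; ring,
    exp_succ]
  simp only [pow_add, pow_one]
  rw [hdiv]
  simp only [gammaD]
  field_simp

end Aux2

section Aux3

variable {q mu : ℝ}

lemma tsum_u_eq (mu q z : ℝ) :
    ∑' k : ℕ, z ^ k / gammaD mu q k * q ^ (k * (k - 1) / 2) = EDunkl mu q z :=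
by
  unfold EDunkl
  exact tsum_congr fun k => by ring

lemma summable_E (hq0 : 0 < q) (hq1 : q < 1) (hmu : 1/2 < mu) {z : ℝ} (hz : 0 ≤ z) :
    Summable (fun k : ℕ => q ^ (k * (k - 1) / 2) * z ^ k / gammaD mu q k) := by
  have := summable_u hq0 hq1 hmu hz
  exact this.congr fun k => by ring

lemma EDunkl_pos (hq0 : 0 < q) (hq1 : q < 1) (hmu : 1/2 < mu) {z : ℝ} (hz : 0 ≤ z) :
    0 < EDunkl mu q z := by
  have hs := summable_E hq0 hq1 hmu hz (mu := mu)
  have h0 : (1:ℝ) ≤ q ^ (0 * (0 - 1) / 2) * z ^ 0 / gammaD mu q 0 := by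
    simp [gammaD]
  have hle : (1:ℝ) ≤ EDunkl mu q z := by
    refine le_trans h0 (Summable.le_tsum hs 0 fun j _ => ?_)
    have := gammaD_pos hq0 hq1 hmu j
    positivity
  linarith

lemma tsum_u_low_eq (hq0 : 0 < q) (hq1 : q < 1) (hmu : 1/2 < mu) {z : ℝ} (hz : 0 ≤ z)
    {n : ℕ} (hn : 0 < n) :
    ∑' k : ℕ, z ^ k / gammaD mu q k * q ^ (k * (k - 1) / 2) * lowB q mu n k
      = q * z / qNum q (n : ℝ) * EDunkl mu q z := by
  set F := fun k : ℕ => z ^ k / gammaD mu q k * q ^ (k * (k - 1) / 2) * lowB q mu n k with hF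
  have hshift : ∀ k : ℕ, F (k+1)
      = (q * z / qNum q (n : ℝ)) * (z ^ k / gammaD mu q k * q ^ (k * (k - 1) / 2)) :=
    fun k => u_low_succ hq0 hq1 hmu hn k
  have hFs : Summable F := by
    refine (summable_nat_add_iff 1).mp ?_
    exact Summable.congr ((summable_u hq0 hq1 hmu hz).mul_left (q * z / qNum q (n : ℝ)))
      fun k => (hshift k).symm
  rw [Summable.tsum_eq_zero_add hFs]
  have hF0 : F 0 = 0 := by simp [hF, low_zero]
  rw [hF0, zero_add, tsum_congr hshift, tsum_mul_left, tsum_u_eq]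

end Aux3

section Aux4

variable {q mu : ℝ}

lemma summable_u_low (hq0 : 0 < q) (hq1 : q < 1) (hmu : 1/2 < mu) {z : ℝ} (hz : 0 ≤ z)
    {n : ℕ} (hn : 0 < n) :
    Summable (fun k : ℕ => z ^ k / gammaD mu q k * q ^ (k * (k - 1) / 2) * lowB q mu n k) := by
  refine (summable_nat_add_iff 1).mp ?_
  exact Summable.congr ((summable_u hq0 hq1 hmu hz).mul_left (q * z / qNum q (n : ℝ)))
    fun k => (u_low_succ hq0 hq1 hmu hn k).symm

lemma qNum_two (hq0 : 0 < q) (hq1 : q < 1) : qNum q 2 = 1 + q := by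
  rw [qNum, show (2:ℝ) = ((2:ℕ):ℝ) by norm_num, Real.rpow_natCast,
    show 1 - q^2 = (1-q)*(1+q) by ring]
  have h1 : (1:ℝ) - q ≠ 0 := by linarith
  field_simp

end Aux4

/-- `K*_{n₁,n₂}(e_{0,1}; q₁, q₂; x, y)
  = (n₂/(n₂+β₂))(α₂/n₂ + 1/([2]_{q₂}[n₂]_{q₂})) + (2n₂q₂/([2]_{q₂}(n₂+β₂))) y`. -/
theorem KB_e01 (n₁ n₂ : ℕ) (hn₁ : 0 < n₁) (hn₂ : 0 < n₂)
    (q₁ q₂ mu₁ mu₂ α₁ α₂ β₁ β₂ x y : ℝ)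
    (hq₁0 : 0 < q₁) (hq₁1 : q₁ < 1) (hq₂0 : 0 < q₂) (hq₂1 : q₂ < 1)
    (hmu₁ : 1 / 2 < mu₁) (hmu₂ : 1 / 2 < mu₂)
    (hα₁ : 0 ≤ α₁) (hα₂ : 0 ≤ α₂) (hβ₁ : 0 ≤ β₁) (hβ₂ : 0 ≤ β₂)
    (hx : 0 ≤ x) (hy : 0 ≤ y) :
    KB n₁ n₂ q₁ q₂ mu₁ mu₂ α₁ α₂ β₁ β₂ (fun _ v => v) x y =
      (n₂ : ℝ) / ((n₂ : ℝ) + β₂) * (α₂ / (n₂ : ℝ) + 1 / (qNum q₂ 2 * qNum q₂ (n₂ : ℝ)))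
        + 2 * (n₂ : ℝ) * q₂ / (qNum q₂ 2 * ((n₂ : ℝ) + β₂)) * y := by

  have hN₁ : 0 < qNum q₁ (n₁ : ℝ) := qNum_pos hq₁0 hq₁1 (by exact_mod_cast hn₁)
  have hN₂ : 0 < qNum q₂ (n₂ : ℝ) := qNum_pos hq₂0 hq₂1 (by exact_mod_cast hn₂)
  set N₁ := qNum q₁ (n₁ : ℝ) with hN₁def
  set N₂ := qNum q₂ (n₂ : ℝ) with hN₂def
  have hz₁ : 0 ≤ N₁ * x := by positivity
  have hz₂ : 0 ≤ N₂ * y := by positivity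
  have hE₁ : 0 < EDunkl mu₁ q₁ (N₁ * x) := EDunkl_pos hq₁0 hq₁1 hmu₁ hz₁
  have hE₂ : 0 < EDunkl mu₂ q₂ (N₂ * y) := EDunkl_pos hq₂0 hq₂1 hmu₂ hz₂
  have hnb : (0:ℝ) < (n₂ : ℝ) + β₂ := by
    have : (0:ℝ) < (n₂:ℝ) := by exact_mod_cast hn₂
    linarith
  have hq₂p : (0:ℝ) < 1 + q₂ := by linarith
  set c₁ : ℝ := (n₂:ℝ) / (((n₂:ℝ) + β₂) * N₁) with hc₁
  set c₀ : ℝ := α₂ / (((n₂:ℝ) + β₂) * N₁) with hc₀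
  set d₁ : ℝ := 2 * c₁ / ((1 + q₂) * N₂) with hd₁
  set d₂ : ℝ := c₁ / ((1 + q₂) * N₂^2) + c₀ / N₂ with hd₂
  set u₁ : ℕ → ℝ := fun k => (N₁ * x) ^ k / gammaD mu₁ q₁ k * q₁ ^ (k * (k - 1) / 2) with hu₁
  set u₂ : ℕ → ℝ := fun k => (N₂ * y) ^ k / gammaD mu₂ q₂ k * q₂ ^ (k * (k - 1) / 2) with hu₂
  have hterm : ∀ k₁ k₂ : ℕ,
      (N₁ * x) ^ k₁ / gammaD mu₁ q₁ k₁ *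
        ((N₂ * y) ^ k₂ / gammaD mu₂ q₂ k₂) *
        q₁ ^ (k₁ * (k₁ - 1) / 2) * q₂ ^ (k₂ * (k₂ - 1) / 2) *
        jacksonInt q₂ (fun t =>
            jacksonInt q₁ (fun s =>
                (fun _ v => (v:ℝ)) (((n₁ : ℝ) * s + α₁) / ((n₁ : ℝ) + β₁))
                  (((n₂ : ℝ) * t + α₂) / ((n₂ : ℝ) + β₂)))
              (lowB q₁ mu₁ n₁ k₁) (uppB q₁ mu₁ n₁ k₁))
          (lowB q₂ mu₂ n₂ k₂) (uppB q₂ mu₂ n₂ k₂)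
      = u₁ k₁ * (u₂ k₂ * lowB q₂ mu₂ n₂ k₂ * d₁ + u₂ k₂ * d₂) := by
    intro k₁ k₂
    have hin : (fun t => jacksonInt q₁ (fun s =>
            (fun _ v => (v:ℝ)) (((n₁ : ℝ) * s + α₁) / ((n₁ : ℝ) + β₁))
              (((n₂ : ℝ) * t + α₂) / ((n₂ : ℝ) + β₂)))
          (lowB q₁ mu₁ n₁ k₁) (uppB q₁ mu₁ n₁ k₁))
        = fun t => c₁ * t + c₀ := by
      funext t
      show jacksonInt q₁ (fun _ => ((n₂ : ℝ) * t + α₂) / ((n₂ : ℝ) + β₂))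
          (lowB q₁ mu₁ n₁ k₁) (uppB q₁ mu₁ n₁ k₁) = c₁ * t + c₀
      rw [jackson_const hq₁0 hq₁1, upp_sub_low hq₁0 hq₁1 hn₁ k₁ (mu := mu₁)]
      rw [show lowB q₁ mu₁ n₁ k₁ + 1 / N₁ - lowB q₁ mu₁ n₁ k₁ = 1 / N₁ by ring, hc₁, hc₀]
      field_simp
    rw [hin, jackson_affine hq₂0 hq₂1, upp_sub_low hq₂0 hq₂1 hn₂ k₂ (mu := mu₂)]
    rw [hu₁, hu₂, hd₁, hd₂, hc₁, hc₀]
    have hγ₁ := gammaD_pos hq₁0 hq₁1 hmu₁ k₁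
    have hγ₂ := gammaD_pos hq₂0 hq₂1 hmu₂ k₂
    rw [← hN₂def]
    field_simp
    ring
  rw [KB]
  rw [tsum_congr fun k₁ => tsum_congr fun k₂ => hterm k₁ k₂]
  have hsum2 : ∑' k₂ : ℕ, (u₂ k₂ * lowB q₂ mu₂ n₂ k₂ * d₁ + u₂ k₂ * d₂)
      = q₂ * (N₂ * y) / N₂ * EDunkl mu₂ q₂ (N₂ * y) * d₁ + EDunkl mu₂ q₂ (N₂ * y) * d₂ := by
    rw [Summable.tsum_add ((summable_u_low hq₂0 hq₂1 hmu₂ hz₂ hn₂).mul_right d₁)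
        ((summable_u hq₂0 hq₂1 hmu₂ hz₂).mul_right d₂),
      tsum_mul_right, tsum_mul_right, tsum_u_low_eq hq₂0 hq₂1 hmu₂ hz₂ hn₂,
      tsum_u_eq]
  rw [tsum_congr fun k₁ => tsum_mul_left (f := fun k₂ => (u₂ k₂ * lowB q₂ mu₂ n₂ k₂ * d₁ + u₂ k₂ * d₂))]
  rw [tsum_congr fun k₁ => congrArg (u₁ k₁ * ·) hsum2]
  rw [tsum_mul_right, tsum_u_eq]
  rw [qNum_two hq₂0 hq₂1, hd₁, hd₂, hc₁, hc₀]
  have hn₂' : (0:ℝ) < (n₂:ℝ) := by exact_mod_cast hn₂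
  rw [← hN₁def, ← hN₂def]
  field_simp
  ring
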